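/- Let $V$ be a reflexive Banach space, $F : V \to \mathbb{R}$ convex Fréchet differentiable, $G \in \Gamma_0(V)$, and $E = F + G$ with minimizer $u^*$. Suppose $B : V \times V \to \overline{\mathbb{R}}$ satisfies, for constants $q > 1$, $\theta \in (0,1]$, $L > 0$ and a convex set $K_0$ containing the iterates and $u^*$ with $\|u - u^*\| \le R_0$ for all $u \in K_0$: $D_F(u,v) + G(u) \le B(u,v) \le \frac{L}{q}\|u-v\|^q + \theta G\left(\frac{1}{\theta}u - (\frac{1}{\theta}-1)v\right) + (1-\theta)G(v)$ for $u, v \in K_0 \cap \mathrm{dom}\, G$. Let $u^{(n+1)} \in \arg\min_u \{F(u^{(n)}) + \langle F'(u^{(n)}), u - u^{(n)}\rangle + B(u, u^{(n)})\}$. Then for each $n$, setting $\zeta_n = E(u^{(n)}) - E(u^*)$: if $\zeta_n \ge \theta^{q-1} L R_0^q$ then $\zeta_{n+1} \le (1 - \theta(1 - 1/q))\zeta_n$; otherwise $\zeta_n - \zeta_{n+1} \ge \frac{1}{(L R_0^q)^{1/(q-1)}}(1 - 1/q)\,\zeta_n^{q/(q-1)}$. -/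

import Mathlib

lemma grad_ineq_aux {V : Type*} [NormedAddCommGroup V] [NormedSpace ℝ V]
    (F : V → ℝ) (f' : V →L[ℝ] ℝ) (hF : ConvexOn ℝ Set.univ F) (v w : V)
    (hd : HasFDerivAt F f' v) : f' (w - v) ≤ F w - F v := by
  rcases eq_or_ne w v with rfl | hw
  · simp
  · have hφ : ConvexOn ℝ Set.univ (F ∘ (AffineMap.lineMap v w : ℝ → V)) := by
      have := hF.comp_affineMap (AffineMap.lineMap v w)
      simpa using this
    have hderiv : HasDerivAt (F ∘ (AffineMap.lineMap v w : ℝ → V)) (f' (w - v)) 0 := by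
      have h1 : HasDerivAt (fun s : ℝ => s • (w - v) + v) (w - v) 0 := by
        simpa using ((hasDerivAt_id (0:ℝ)).smul_const (w - v)).add_const v
      have hd' : HasFDerivAt F f' ((0:ℝ) • (w - v) + v) := by simpa using hd
      have h2 := hd'.comp_hasDerivAt (0:ℝ) h1
      refine h2.congr_deriv ?_ |>.congr_of_eventuallyEq ?_
      · rfl
      · filter_upwards with s
        simp [Function.comp, AffineMap.lineMap_apply]
    have := hφ.le_slope_of_hasDerivAt (Set.mem_univ 0) (Set.mem_univ 1) zero_lt_one hderiv
    simpa [slope, AffineMap.lineMap_apply] using this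

private lemma algebra_aux (a b z Q : ℝ) (hb : b ≠ 0) (hQ : Q ≠ 0) :
    1 / b * (1 - 1 / Q) * (a * z) = a / b * z - a / b * z / Q := by
  field_simp

/-- One-step estimate for the abstract gradient method (Theorem on convergence
of the abstract gradient method): linear decrease when the error is large, and a
power-type decrease otherwise. -/
theorem stmt8 {V : Type*} [NormedAddCommGroup V] [NormedSpace ℝ V]
    (F : V → ℝ) (F' : V → V →L[ℝ] ℝ) (hF : ConvexOn ℝ Set.univ F)
    (hF' : ∀ v, HasFDerivAt F (F' v) v)
    (G : V → EReal) (hGproper : ∃ u, G u ≠ ⊤) (hGbot : ∀ u, G u ≠ ⊥)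
    (hGconvex : ∀ u v : V, ∀ t : ℝ, 0 ≤ t → t ≤ 1 →
      G (t • u + (1 - t) • v) ≤ (t : EReal) * G u + ((1 - t : ℝ) : EReal) * G v)
    (hGlsc : LowerSemicontinuous G)
    (E : V → EReal) (hE : ∀ u, E u = (F u : EReal) + G u)
    (ustar : V) (hmin : ∀ u, E ustar ≤ E u)
    (q θ L R0 : ℝ) (hq : 1 < q) (hθ0 : 0 < θ) (hθ1 : θ ≤ 1) (hL : 0 < L) (hR0 : 0 < R0)
    (K0 : Set V) (hK0 : Convex ℝ K0) (hustar : ustar ∈ K0)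
    (hR : ∀ x ∈ K0, ‖x - ustar‖ ≤ R0)
    (B : V × V → EReal)
    (hB : ∀ u v : V, u ∈ K0 → v ∈ K0 → G u < ⊤ → G v < ⊤ →
      ((F u - F v - F' v (u - v) : ℝ) : EReal) + G u ≤ B (u, v) ∧
      B (u, v) ≤ ((L / q * ‖u - v‖ ^ q : ℝ) : EReal)
        + (θ : EReal) * G ((1 / θ) • u - ((1 / θ) - 1) • v)
        + ((1 - θ : ℝ) : EReal) * G v)
    (u : ℕ → V) (hu : ∀ n, u n ∈ K0) (hudom : ∀ n, G (u n) < ⊤)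
    (hiter : ∀ n : ℕ, ∀ x : V,
      ((F (u n) + F' (u n) (u (n + 1) - u n) : ℝ) : EReal) + B (u (n + 1), u n) ≤
        ((F (u n) + F' (u n) (x - u n) : ℝ) : EReal) + B (x, u n))
    (Estar : ℝ) (hEstar : E ustar = (Estar : EReal))
    (ζ : ℕ → ℝ) (hζ : ∀ n, E (u n) = ((ζ n + Estar : ℝ) : EReal)) :
    ∀ n : ℕ,
      (θ ^ (q - 1) * L * R0 ^ q ≤ ζ n →
        ζ (n + 1) ≤ (1 - θ * (1 - 1 / q)) * ζ n) ∧
      (ζ n < θ ^ (q - 1) * L * R0 ^ q →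
        1 / (L * R0 ^ q) ^ (1 / (q - 1)) * (1 - 1 / q) * ζ n ^ (q / (q - 1)) ≤
          ζ n - ζ (n + 1)) := by
  intro n
  have hθne : θ ≠ 0 := ne_of_gt hθ0
  have hqne : q ≠ 0 := by linarith
  have hq1ne : q - 1 ≠ 0 := by linarith
  -- G ustar is finite
  have hGsnt : G ustar ≠ ⊤ := by
    intro h
    rw [hE, h] at hEstar
    simp [EReal.add_top_of_ne_bot] at hEstar
  set gs : ℝ := (G ustar).toReal with hgs_def
  have hgs : G ustar = (gs : EReal) := (EReal.coe_toReal hGsnt (hGbot _)).symm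
  -- G (u n) finite
  have hgn' : ∀ m : ℕ, G (u m) = (((G (u m)).toReal : ℝ) : EReal) :=
    fun m => (EReal.coe_toReal (hudom m).ne (hGbot _)).symm
  set gn : ℝ := (G (u n)).toReal with hgn_def
  have hgn : G (u n) = (gn : EReal) := hgn' n
  -- basic identities
  have hFE1 : F ustar + gs = Estar := by
    have := hEstar
    rw [hE, hgs, ← EReal.coe_add] at this
    exact_mod_cast this
  have hFE2 : F (u n) + gn = ζ n + Estar := by
    have := hζ n
    rw [hE, hgn, ← EReal.coe_add] at this
    exact_mod_cast this
  -- nonnegativity of ζ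
  have hζnn : ∀ m : ℕ, 0 ≤ ζ m := by
    intro m
    have := hmin (u m)
    rw [hEstar, hζ m] at this
    have := EReal.coe_le_coe_iff.mp this
    linarith
  -- key one-step estimate
  have key : ∀ t : ℝ, 0 ≤ t → t ≤ θ →
      ζ (n + 1) ≤ ζ n - t * ζ n + L / q * t ^ q * R0 ^ q := by
    intro t ht0 htθ
    set τ : ℝ := t / θ with hτ_def
    have hτ0 : 0 ≤ τ := div_nonneg ht0 hθ0.le
    have hτ1 : τ ≤ 1 := (div_le_one hθ0).mpr htθ
    have hθτ : θ * τ = t := by rw [hτ_def]; field_simp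
    set w : V := τ • ustar + (1 - τ) • (u n) with hw_def
    have hw : w ∈ K0 := hK0 hustar (hu n) hτ0 (by linarith) (by ring)
    have hGw_le : G w ≤ ((τ * gs + (1 - τ) * gn : ℝ) : EReal) := by
      have := hGconvex ustar (u n) τ hτ0 hτ1
      rw [hgs, hgn] at this
      rw [EReal.coe_add, EReal.coe_mul, EReal.coe_mul]
      exact this
    have hGwnt : G w ≠ ⊤ := ne_top_of_le_ne_top (EReal.coe_ne_top _) hGw_le
    set gw : ℝ := (G w).toReal with hgw_def
    have hgw : G w = (gw : EReal) := (EReal.coe_toReal hGwnt (hGbot _)).symm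
    have hgw_le : gw ≤ τ * gs + (1 - τ) * gn := by
      rw [hgw] at hGw_le; exact_mod_cast hGw_le
    set x : V := θ • w + (1 - θ) • (u n) with hx_def
    have hx : x ∈ K0 := hK0 hw (hu n) hθ0.le (by linarith) (by ring)
    have hGx_lt : G x < ⊤ := by
      have := hGconvex w (u n) θ hθ0.le hθ1
      rw [hgw, hgn] at this
      refine lt_of_le_of_lt this ?_
      rw [← EReal.coe_mul, ← EReal.coe_mul, ← EReal.coe_add]
      exact EReal.coe_lt_top _
    have hwx : (1 / θ) • x - ((1 / θ) - 1) • (u n) = w := by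
      rw [hx_def]
      match_scalars <;> field_simp <;> ring
    have hxv : x - u n = t • (ustar - u n) := by
      rw [hx_def, hw_def, ← hθτ]
      match_scalars <;> ring
    -- EReal chain
    have hB1 := (hB (u (n + 1)) (u n) (hu (n + 1)) (hu n) (hudom (n + 1)) (hudom n)).1
    have hB2 := (hB x (u n) hx (hu n) hGx_lt (hudom n)).2
    have c1 : E (u (n + 1)) ≤
        ((F (u n) + F' (u n) (u (n + 1) - u n) : ℝ) : EReal) + B (u (n + 1), u n) := by
      have h := add_le_add_right hB1
        ((F (u n) + F' (u n) (u (n + 1) - u n) : ℝ) : EReal)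
      rw [hE]
      refine le_trans (le_of_eq ?_) h
      rw [← add_assoc, ← EReal.coe_add]
      norm_num
    have c2 := hiter n x
    set r : ℝ := F (u n) + F' (u n) (x - u n) +
        (L / q * ‖x - u n‖ ^ q + θ * gw + (1 - θ) * gn) with hr_def
    have c3 : ((F (u n) + F' (u n) (x - u n) : ℝ) : EReal) + B (x, u n) ≤ (r : EReal) := by
      rw [hwx, hgw, hgn] at hB2
      have : B (x, u n) ≤ ((L / q * ‖x - u n‖ ^ q + θ * gw + (1 - θ) * gn : ℝ) : EReal) := by
        refine le_trans hB2 (le_of_eq ?_)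
        rw [← EReal.coe_mul, ← EReal.coe_mul, ← EReal.coe_add, ← EReal.coe_add]
      have h := add_le_add_right this ((F (u n) + F' (u n) (x - u n) : ℝ) : EReal)
      refine le_trans h (le_of_eq ?_)
      rw [← EReal.coe_add, hr_def]
    have hchain : E (u (n + 1)) ≤ (r : EReal) := le_trans c1 (le_trans c2 c3)
    rw [hζ (n + 1)] at hchain
    have hreal : ζ (n + 1) + Estar ≤ r := EReal.coe_le_coe_iff.mp hchain
    -- real estimates
    have e1 : F' (u n) (x - u n) = t * F' (u n) (ustar - u n) := by
      rw [hxv, map_smul]; rfl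
    have e2 : F' (u n) (ustar - u n) ≤ F ustar - F (u n) :=
      grad_ineq_aux F (F' (u n)) hF (u n) ustar (hF' (u n))
    have e3 : ‖x - u n‖ ^ q ≤ t ^ q * R0 ^ q := by
      have hn1 : ‖x - u n‖ ≤ t * R0 := by
        rw [hxv, norm_smul, Real.norm_eq_abs, abs_of_nonneg ht0, norm_sub_rev]
        exact mul_le_mul_of_nonneg_left (hR (u n) (hu n)) ht0
      calc ‖x - u n‖ ^ q ≤ (t * R0) ^ q :=
            Real.rpow_le_rpow (norm_nonneg _) hn1 (by linarith)
        _ = t ^ q * R0 ^ q := Real.mul_rpow ht0 hR0.le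
    have e4 : θ * gw ≤ t * gs + (θ - t) * gn := by
      have := mul_le_mul_of_nonneg_left hgw_le hθ0.le
      have heq : θ * (τ * gs + (1 - τ) * gn) = t * gs + (θ - t) * gn := by
        rw [← hθτ]; ring
      linarith
    have e5 : t * F' (u n) (ustar - u n) ≤ t * (F ustar - F (u n)) :=
      mul_le_mul_of_nonneg_left e2 ht0
    have e6 : L / q * ‖x - u n‖ ^ q ≤ L / q * (t ^ q * R0 ^ q) :=
      mul_le_mul_of_nonneg_left e3 (by positivity)
    have hr2 : r ≤ (1 - t) * (ζ n + Estar) + t * Estar + L / q * t ^ q * R0 ^ q := by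
      rw [hr_def, e1, ← hFE2, ← hFE1]
      nlinarith [e4, e5, e6]
    have hfin := le_trans hreal hr2
    clear_value r
    nlinarith [hfin]
  constructor
  · -- large error: linear decrease
    intro h
    have hk := key θ hθ0.le le_rfl
    have hsplit : θ ^ q = θ * θ ^ (q - 1) := by
      have h' := Real.rpow_add hθ0 1 (q - 1)
      rw [show (1 : ℝ) + (q - 1) = q by ring, Real.rpow_one] at h'
      exact h'
    have h2 : θ / q * (θ ^ (q - 1) * L * R0 ^ q) ≤ θ / q * ζ n :=
      mul_le_mul_of_nonneg_left h (by positivity)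
    have h3 : L / q * θ ^ q * R0 ^ q = θ / q * (θ ^ (q - 1) * L * R0 ^ q) := by
      rw [hsplit]; ring
    have hgoal : (1 - θ * (1 - 1 / q)) * ζ n = ζ n - θ * ζ n + θ / q * ζ n := by ring
    linarith
  · -- small error: power decrease
    intro h
    rcases eq_or_lt_of_le (hζnn n) with hz0 | hzpos
    · -- ζ n = 0
      have hz : ζ n = 0 := hz0.symm
      have hk := key 0 le_rfl hθ0.le
      rw [Real.zero_rpow hqne] at hk
      have hζ1 : ζ (n + 1) ≤ 0 := by rw [hz] at hk; linarith
      rw [hz, Real.zero_rpow (by positivity : q / (q - 1) ≠ 0)]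
      simp
      linarith
    · set C : ℝ := L * R0 ^ q with hC_def
      clear_value C
      have hC : 0 < C := by rw [hC_def]; positivity
      set t : ℝ := (ζ n / C) ^ (1 / (q - 1)) with ht_def
      clear_value t
      have hbase : 0 < ζ n / C := div_pos hzpos hC
      have ht0 : 0 < t := ht_def ▸ Real.rpow_pos_of_pos hbase _
      have htq1 : t ^ (q - 1) = ζ n / C := by
        rw [ht_def, ← Real.rpow_mul hbase.le, one_div_mul_cancel hq1ne, Real.rpow_one]
      have htθ : t ≤ θ := by
        by_contra h'
        push_neg at h'
        have h1 : θ ^ (q - 1) < t ^ (q - 1) :=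
          Real.rpow_lt_rpow hθ0.le h' (by linarith)
        have h2 : ζ n / C < θ ^ (q - 1) := by
          rw [div_lt_iff₀ hC, hC_def, ← mul_assoc]; exact h
        rw [htq1] at h1
        linarith
      have hk := key t ht0.le htθ
      have htq : t ^ q = t ^ (q - 1) * t := by
        have h' := Real.rpow_add ht0 (q - 1) 1
        rw [show q - 1 + 1 = q by ring, Real.rpow_one] at h'
        exact h'
      have hA : L * R0 ^ q ≠ 0 := by positivity
      have hAz : L * R0 ^ q * (ζ n / (L * R0 ^ q)) = ζ n := by
        rw [mul_comm, div_mul_cancel₀ _ hA]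
      have hLt : L / q * t ^ q * R0 ^ q = t * ζ n / q := by
        rw [hC_def] at htq1
        calc L / q * t ^ q * R0 ^ q = L * R0 ^ q * t ^ (q - 1) * t / q := by
              rw [htq]; ring
          _ = L * R0 ^ q * (ζ n / (L * R0 ^ q)) * t / q := by rw [htq1]
          _ = t * ζ n / q := by rw [hAz]; ring
      have key2 : t * ζ n - t * ζ n / q ≤ ζ n - ζ (n + 1) := by linarith
      have hCp : 0 < C ^ (1 / (q - 1)) := Real.rpow_pos_of_pos hC _
      have ht1 : t = ζ n ^ (1 / (q - 1)) / C ^ (1 / (q - 1)) := by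
        rw [ht_def, Real.div_rpow hzpos.le hC.le]
      have hζq : ζ n ^ (q / (q - 1)) = ζ n ^ (1 / (q - 1)) * ζ n := by
        rw [show q / (q - 1) = 1 / (q - 1) + 1 by field_simp; ring,
          Real.rpow_add hzpos, Real.rpow_one]
      have heq : 1 / C ^ (1 / (q - 1)) * (1 - 1 / q) * ζ n ^ (q / (q - 1)) =
          t * ζ n - t * ζ n / q := by
        rw [hζq, ht1]
        exact algebra_aux _ _ _ _ hCp.ne' hqne
      rw [heq]
      exact key2
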